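/- For all real t with 0 < t ≤ 1, cot(t) ≥ 1/t - t/3 - t³/40. -/

import Mathlib

open Real

private lemma nonneg_of_deriv (f : ℝ → ℝ) (hf : Differentiable ℝ f) (h0 : f 0 = 0)
    (hd : ∀ y : ℝ, 0 ≤ y → 0 ≤ deriv f y) {x : ℝ} (hx : 0 ≤ x) : 0 ≤ f x := by
  have hmono := monotoneOn_of_deriv_nonneg (convex_Ici (0:ℝ)) hf.continuous.continuousOn
    (hf.differentiableOn)
    (fun y hy => hd y (le_of_lt (by simpa [interior_Ici] using hy)))
  have := hmono (Set.self_mem_Ici) (Set.mem_Ici.2 hx) hx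
  linarith [h0 ▸ this]

private lemma sin_ge_aux {x : ℝ} (hx : 0 ≤ x) : x - x^3/6 ≤ Real.sin x := by
  have := nonneg_of_deriv (fun y => Real.sin y - y + y^3/6)
    (by fun_prop) (by simp)
    (fun y hy => by
      have hD : deriv (fun y => Real.sin y - y + y^3/6) y = Real.cos y - 1 + y^2/2 := by
        have : HasDerivAt (fun y : ℝ => Real.sin y - y + y^3/6)
            (Real.cos y - 1 + 3 * y^2/6) y := by
          have := ((Real.hasDerivAt_sin y).sub (hasDerivAt_id y)).add
            (((hasDerivAt_pow 3 y)).div_const 6)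
          simp at this; exact this
        have h2 := this.deriv
        rw [h2]; ring
      rw [hD]
      nlinarith [Real.one_sub_sq_div_two_le_cos (x := y)]) hx
  linarith

private lemma cos_le_aux {x : ℝ} (hx : 0 ≤ x) : Real.cos x ≤ 1 - x^2/2 + x^4/24 := by
  have := nonneg_of_deriv (fun y => 1 - y^2/2 + y^4/24 - Real.cos y)
    (by fun_prop) (by simp)
    (fun y hy => by
      have hD : deriv (fun y : ℝ => 1 - y^2/2 + y^4/24 - Real.cos y) y
          = -y + y^3/6 + Real.sin y := by
        have : HasDerivAt (fun y : ℝ => 1 - y^2/2 + y^4/24 - Real.cos y)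
            ((0 - 2*y/2 + 4*y^3/24) - (-Real.sin y)) y := by
          have := (((hasDerivAt_const y (1:ℝ)).sub ((hasDerivAt_pow 2 y).div_const 2)).add
            ((hasDerivAt_pow 4 y).div_const 24)).sub (Real.hasDerivAt_cos y)
          simp at this ⊢; exact this
        have h2 := this.deriv
        rw [h2]; ring
      rw [hD]
      nlinarith [sin_ge_aux hy]) hx
  linarith

private lemma sin_le_aux {x : ℝ} (hx : 0 ≤ x) : Real.sin x ≤ x - x^3/6 + x^5/120 := by
  have := nonneg_of_deriv (fun y => y - y^3/6 + y^5/120 - Real.sin y)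
    (by fun_prop) (by simp)
    (fun y hy => by
      have hD : deriv (fun y : ℝ => y - y^3/6 + y^5/120 - Real.sin y) y
          = 1 - y^2/2 + y^4/24 - Real.cos y := by
        have : HasDerivAt (fun y : ℝ => y - y^3/6 + y^5/120 - Real.sin y)
            ((1 - 3*y^2/6 + 5*y^4/120) - Real.cos y) y := by
          have := (((hasDerivAt_id y).sub ((hasDerivAt_pow 3 y).div_const 6)).add
            ((hasDerivAt_pow 5 y).div_const 120)).sub (Real.hasDerivAt_sin y)
          simp at this; exact this
        have h2 := this.deriv
        rw [h2]; ring
      rw [hD]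
      nlinarith [cos_le_aux hy]) hx
  linarith

private lemma cos_ge_aux {x : ℝ} (hx : 0 ≤ x) :
    1 - x^2/2 + x^4/24 - x^6/720 ≤ Real.cos x := by
  have := nonneg_of_deriv (fun y => Real.cos y - (1 - y^2/2 + y^4/24 - y^6/720))
    (by fun_prop) (by simp)
    (fun y hy => by
      have hD : deriv (fun y : ℝ => Real.cos y - (1 - y^2/2 + y^4/24 - y^6/720)) y
          = -Real.sin y - (-y + y^3/6 - y^5/120) := by
        have : HasDerivAt (fun y : ℝ => Real.cos y - (1 - y^2/2 + y^4/24 - y^6/720))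
            (-Real.sin y - ((0 - 2*y/2 + 4*y^3/24) - 6*y^5/720)) y := by
          have := (Real.hasDerivAt_cos y).sub
            ((((hasDerivAt_const y (1:ℝ)).sub ((hasDerivAt_pow 2 y).div_const 2)).add
              ((hasDerivAt_pow 4 y).div_const 24)).sub ((hasDerivAt_pow 6 y).div_const 720))
          simp at this ⊢; exact this
        have h2 := this.deriv
        rw [h2]; ring
      rw [hD]
      nlinarith [sin_le_aux hy]) hx
  linarith

theorem stmt_8 (t : ℝ) (h1 : 0 < t) (h2 : t ≤ 1) :
    Real.cos t / Real.sin t ≥ 1/t - t/3 - t^3/40 := by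
  have hs : 0 < Real.sin t :=
    Real.sin_pos_of_pos_of_lt_pi h1 (lt_of_le_of_lt h2 (by linarith [Real.pi_gt_three]))
  rw [ge_iff_le, ← sub_nonneg]
  have key : (1/t - t/3 - t^3/40) * Real.sin t ≤ Real.cos t := by
    have hsu := sin_le_aux h1.le
    have hcl := cos_ge_aux h1.le
    have ht2 : t^2 ≤ 1 := pow_le_one₀ h1.le h2
    have ht4 : t^4 ≤ 1 := pow_le_one₀ h1.le h2
    have hpos : (0:ℝ) ≤ 1 - t^2/3 - t^4/40 := by nlinarith
    have h3 : (1/t - t/3 - t^3/40) * Real.sin t = (1 - t^2/3 - t^4/40) / t * Real.sin t := by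
      field_simp
    rw [h3]
    rw [div_mul_eq_mul_div, div_le_iff₀ h1]
    calc (1 - t^2/3 - t^4/40) * Real.sin t
        ≤ (1 - t^2/3 - t^4/40) * (t - t^3/6 + t^5/120) := by
          apply mul_le_mul_of_nonneg_left hsu hpos
      _ ≤ (1 - t^2/2 + t^4/24 - t^6/720) * t := by nlinarith [pow_pos h1 9, mul_nonneg (pow_nonneg h1.le 5) (by linarith : (0:ℝ) ≤ 1 - t^2)]
      _ ≤ Real.cos t * t := by
          apply mul_le_mul_of_nonneg_right hcl h1.le
  have h4 : (1/t - t/3 - t^3/40) ≤ Real.cos t / Real.sin t := by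
    rw [le_div_iff₀ hs]; exact key
  linarith
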